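/- Let r ≥ 2 and let n be a positive multiple of r. If G is a K_{r+1}-free graph on n vertices, then the number of r-cliques of G satisfies c_r(G) ≤ (n/r)^r, and this bound is attained by the r-partite Turán graph T_r(n), which has exactly (n/r)^r r-cliques. -/

import Mathlib

open Finset

/-- The finset of all `r`-cliques (sets of `r` pairwise adjacent vertices) of `G`. -/
noncomputable def rCliques {V : Type*} [Fintype V] [DecidableEq V]
    (G : SimpleGraph V) (r : ℕ) : Finset (Finset V) :=
  letI := Classical.decPred (fun K : Finset V => G.IsNClique r K)
  Finset.univ.filter (fun K => G.IsNClique r K)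

/-- The `r`-clique spectral radius of `G`: the supremum over nonnegative vectors `x`
with `∑ v, x v ^ r = 1` of `r * ∑_{K an r-clique} ∏_{i ∈ K} x i`. -/
noncomputable def cliqueSpecRad {V : Type*} [Fintype V] [DecidableEq V]
    (G : SimpleGraph V) (r : ℕ) : ℝ :=
  sSup { y : ℝ | ∃ x : V → ℝ, (∀ v, 0 ≤ x v) ∧ (∑ v, x v ^ r) = 1 ∧
    y = r * ∑ K ∈ rCliques G r, ∏ i ∈ K, x i }

lemma mem_rCliques {V : Type*} [Fintype V] [DecidableEq V] {G : SimpleGraph V} {r : ℕ}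
    {K : Finset V} : K ∈ rCliques G r ↔ G.IsNClique r K := by
  classical
  simp [rCliques]

/-- AM-GM for finsets with natural exponents. -/
lemma amgm_finset {ι : Type*} (s : Finset ι) (hs : s.Nonempty) (x : ι → ℝ)
    (hx : ∀ i ∈ s, 0 ≤ x i) :
    ∏ i ∈ s, x i ≤ ((∑ i ∈ s, x i) / s.card) ^ s.card := by
  have hm0 : s.card ≠ 0 := Finset.card_ne_zero_of_mem hs.choose_spec
  have hm : (0:ℝ) < s.card := by exact_mod_cast Nat.pos_of_ne_zero hm0
  have hP : (0:ℝ) ≤ ∏ i ∈ s, x i := Finset.prod_nonneg hx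
  have h := Real.geom_mean_le_arith_mean_weighted s (fun _ => ((s.card : ℝ))⁻¹) x
    (fun i _ => by positivity) (by
      rw [Finset.sum_const, nsmul_eq_mul]
      field_simp) hx
  have hprod : ∏ i ∈ s, x i ^ (((s.card : ℕ) : ℝ))⁻¹ = (∏ i ∈ s, x i) ^ (((s.card : ℕ) : ℝ))⁻¹ :=
    Real.finset_prod_rpow s x hx _
  have hsum : ∑ i ∈ s, ((s.card : ℝ))⁻¹ * x i = (∑ i ∈ s, x i) / s.card := by
    rw [← Finset.mul_sum]; ring
  rw [hprod, hsum] at h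
  calc ∏ i ∈ s, x i = (((∏ i ∈ s, x i) ^ (((s.card : ℕ) : ℝ))⁻¹) ) ^ s.card := by
        rw [Real.rpow_inv_natCast_pow hP hm0]
    _ ≤ ((∑ i ∈ s, x i) / s.card) ^ s.card :=
        pow_le_pow_left₀ (Real.rpow_nonneg hP _) h _

lemma clique_card_le {V : Type*} {G : SimpleGraph V} {r : ℕ}
    (hfree : G.CliqueFree (r + 1)) {s : Finset V} (hs : G.IsClique (s : Set V)) :
    s.card ≤ r := by
  by_contra h
  push_neg at h
  obtain ⟨t, hts, htc⟩ := Finset.exists_subset_card_eq (s := s) (n := r + 1) h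
  exact hfree t ⟨hs.subset (Finset.coe_subset.2 hts), htc⟩

lemma shift_le {V : Type*} [Fintype V] [DecidableEq V] (G : SimpleGraph V) (r : ℕ)
    (x : V → ℝ) (i j : V) (hij : i ≠ j) (hna : ¬ G.Adj i j) (hxj : 0 ≤ x j)
    (hAB : ∑ K ∈ (rCliques G r).filter (fun K => j ∈ K), ∏ k ∈ K.erase j, x k
         ≤ ∑ K ∈ (rCliques G r).filter (fun K => i ∈ K), ∏ k ∈ K.erase i, x k) :
    ∑ K ∈ rCliques G r, ∏ k ∈ K, x k
      ≤ ∑ K ∈ rCliques G r, ∏ k ∈ K,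
          Function.update (Function.update x j 0) i (x i + x j) k := by
  classical
  set y := Function.update (Function.update x j 0) i (x i + x j) with hy
  have hyi : y i = x i + x j := by rw [hy]; simp
  have hyj : y j = 0 := by
    rw [hy, Function.update_of_ne hij.symm, Function.update_self]
  have hyk : ∀ v, v ≠ i → v ≠ j → y v = x v := by
    intro v hvi hvj
    rw [hy, Function.update_of_ne hvi, Function.update_of_ne hvj]
  have hnot : ∀ K ∈ rCliques G r, i ∈ K → j ∉ K := by
    intro K hK hiK hjK
    exact hna ((mem_rCliques.1 hK).1 (by exact_mod_cast hiK) (by exact_mod_cast hjK) hij)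
  -- decomposition of the sum
  have split : ∀ z : V → ℝ, ∑ K ∈ rCliques G r, ∏ k ∈ K, z k
      = (∑ K ∈ (rCliques G r).filter (fun K => i ∈ K), ∏ k ∈ K, z k)
      + ((∑ K ∈ (rCliques G r).filter (fun K => j ∈ K), ∏ k ∈ K, z k)
      + ∑ K ∈ (rCliques G r).filter (fun K => i ∉ K ∧ j ∉ K), ∏ k ∈ K, z k) := by
    intro z
    rw [← Finset.sum_filter_add_sum_filter_not (rCliques G r) (fun K => i ∈ K)
      (fun K => ∏ k ∈ K, z k)]
    congr 1
    have hfe : (rCliques G r).filter (fun K => (i ∉ K) ∧ j ∈ K)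
        = (rCliques G r).filter (fun K => j ∈ K) :=
      Finset.filter_congr fun K hK =>
        ⟨fun h => h.2, fun hjK => ⟨fun hiK => hnot K hK hiK hjK, hjK⟩⟩
    rw [← Finset.sum_filter_add_sum_filter_not ((rCliques G r).filter (fun K => i ∉ K))
      (fun K => j ∈ K) (fun K => ∏ k ∈ K, z k), Finset.filter_filter, Finset.filter_filter, hfe]
  have eqCi : ∀ K ∈ (rCliques G r).filter (fun K => i ∈ K),
      (∏ k ∈ K, x k = x i * ∏ k ∈ K.erase i, x k) ∧
      (∏ k ∈ K, y k = (x i + x j) * ∏ k ∈ K.erase i, x k) := by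
    intro K hK
    obtain ⟨hK, hiK⟩ := Finset.mem_filter.1 hK
    have hjK : j ∉ K := hnot K hK hiK
    have herase : ∏ k ∈ K.erase i, y k = ∏ k ∈ K.erase i, x k := by
      apply Finset.prod_congr rfl
      intro k hk
      exact hyk k (Finset.ne_of_mem_erase hk)
        (fun h => hjK (h ▸ Finset.mem_of_mem_erase hk))
    constructor
    · exact (Finset.mul_prod_erase K x hiK).symm
    · rw [← Finset.mul_prod_erase K y hiK, hyi, herase]
  have eqCj : ∀ K ∈ (rCliques G r).filter (fun K => j ∈ K),
      (∏ k ∈ K, x k = x j * ∏ k ∈ K.erase j, x k) ∧ (∏ k ∈ K, y k = 0) := by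
    intro K hK
    obtain ⟨hK, hjK⟩ := Finset.mem_filter.1 hK
    exact ⟨(Finset.mul_prod_erase K x hjK).symm, Finset.prod_eq_zero hjK hyj⟩
  have eqC0 : ∀ K ∈ (rCliques G r).filter (fun K => i ∉ K ∧ j ∉ K),
      ∏ k ∈ K, y k = ∏ k ∈ K, x k := by
    intro K hK
    obtain ⟨hK, hiK, hjK⟩ := Finset.mem_filter.1 hK
    exact Finset.prod_congr rfl fun k hk =>
      hyk k (fun h => hiK (h ▸ hk)) (fun h => hjK (h ▸ hk))
  rw [split x, split y,
    Finset.sum_congr rfl (fun K hK => (eqCi K hK).1),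
    Finset.sum_congr rfl (fun K hK => (eqCi K hK).2),
    Finset.sum_congr rfl (fun K hK => (eqCj K hK).1),
    Finset.sum_congr rfl (fun K hK => (eqCj K hK).2),
    Finset.sum_congr rfl eqC0]
  rw [← Finset.mul_sum, ← Finset.mul_sum, ← Finset.mul_sum, Finset.sum_const_zero]
  have := mul_le_mul_of_nonneg_left hAB hxj
  nlinarith [this]

lemma keyN {V : Type*} [Fintype V] [DecidableEq V] {r : ℕ} (hr : 1 ≤ r)
    (G : SimpleGraph V) (hfree : G.CliqueFree (r + 1)) :
    ∀ N (x : V → ℝ), (∀ v, 0 ≤ x v) →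
      (Finset.univ.filter (fun v => x v ≠ 0)).card ≤ N →
      ∑ K ∈ rCliques G r, ∏ k ∈ K, x k ≤ ((∑ v, x v) / r) ^ r := by
  classical
  intro N
  induction N with
  | zero =>
    intro x hx hcard
    have hzero : ∀ v, x v = 0 := by
      intro v
      by_contra h
      have hv : v ∈ Finset.univ.filter (fun v => x v ≠ 0) :=
        Finset.mem_filter.2 ⟨Finset.mem_univ v, h⟩
      have := Finset.card_pos.2 ⟨v, hv⟩
      omega
    have h1 : ∑ K ∈ rCliques G r, ∏ k ∈ K, x k = 0 := by
      apply Finset.sum_eq_zero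
      intro K hK
      have hKc : K.card = r := (mem_rCliques.1 hK).2
      obtain ⟨v, hv⟩ := Finset.card_pos.1 (by omega : 0 < K.card)
      exact Finset.prod_eq_zero hv (hzero v)
    rw [h1]
    apply pow_nonneg
    exact div_nonneg (Finset.sum_nonneg fun v _ => hx v) (by positivity)
  | succ N ih =>
    intro x hx hcard
    set S := Finset.univ.filter (fun v => x v ≠ 0) with hS
    have hRHS : (0:ℝ) ≤ ((∑ v, x v) / r) ^ r :=
      pow_nonneg (div_nonneg (Finset.sum_nonneg fun v _ => hx v) (by positivity)) _
    by_cases hcl : G.IsClique (S : Set V)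
    · -- support is a clique
      have hSr : S.card ≤ r := clique_card_le hfree hcl
      have hzeroK : ∀ K ∈ rCliques G r, K ≠ S → ∏ k ∈ K, x k = 0 := by
        intro K hK hne
        have hKc : K.card = r := (mem_rCliques.1 hK).2
        have hnsub : ¬ K ⊆ S := fun hsub =>
          hne (Finset.eq_of_subset_of_card_le hsub (by omega))
        obtain ⟨v, hvK, hvS⟩ := Finset.not_subset.1 hnsub
        have hxv : x v = 0 := by
          by_contra h
          exact hvS (Finset.mem_filter.2 ⟨Finset.mem_univ _, h⟩)
        exact Finset.prod_eq_zero hvK hxv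
      by_cases hSC : S ∈ rCliques G r
      · have hScard : S.card = r := (mem_rCliques.1 hSC).2
        have hsum : ∑ K ∈ rCliques G r, ∏ k ∈ K, x k = ∏ k ∈ S, x k :=
          Finset.sum_eq_single_of_mem S hSC hzeroK
        rw [hsum]
        have hSne : S.Nonempty := Finset.card_pos.1 (by omega)
        calc ∏ k ∈ S, x k ≤ ((∑ k ∈ S, x k) / S.card) ^ S.card :=
              amgm_finset S hSne x (fun k _ => hx k)
          _ = ((∑ k ∈ S, x k) / r) ^ r := by rw [hScard]
          _ ≤ ((∑ v, x v) / r) ^ r := by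
              gcongr
              · exact div_nonneg (Finset.sum_nonneg fun v _ => hx v) (by positivity)
              · exact fun i _ _ => hx i
              · exact Finset.subset_univ S
      · have hsum : ∑ K ∈ rCliques G r, ∏ k ∈ K, x k = 0 :=
          Finset.sum_eq_zero fun K hK =>
            hzeroK K hK (fun h => hSC (h ▸ hK))
        rw [hsum]; exact hRHS
    · -- support is not a clique : shift weight
      rw [SimpleGraph.isClique_iff, Set.Pairwise] at hcl
      push_neg at hcl
      obtain ⟨i, hiS, j, hjS, hij, hna⟩ := hcl
      have hiS' : i ∈ S := by exact_mod_cast hiS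
      have hjS' : j ∈ S := by exact_mod_cast hjS
      have main : ∀ a b : V, a ∈ S → b ∈ S → a ≠ b → ¬ G.Adj a b →
          (∑ K ∈ (rCliques G r).filter (fun K => b ∈ K), ∏ k ∈ K.erase b, x k
            ≤ ∑ K ∈ (rCliques G r).filter (fun K => a ∈ K), ∏ k ∈ K.erase a, x k) →
          ∑ K ∈ rCliques G r, ∏ k ∈ K, x k ≤ ((∑ v, x v) / r) ^ r := by
        intro a b haS hbS hab hnab hAB
        refine le_trans (shift_le G r x a b hab hnab (hx b) hAB) ?_
        set y := Function.update (Function.update x b 0) a (x a + x b) with hy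
        have hya : y a = x a + x b := by rw [hy]; simp
        have hyb : y b = 0 := by
          rw [hy, Function.update_of_ne hab.symm, Function.update_self]
        have hyk : ∀ v, v ≠ a → v ≠ b → y v = x v := by
          intro v hva hvb
          rw [hy, Function.update_of_ne hva, Function.update_of_ne hvb]
        have hy0 : ∀ v, 0 ≤ y v := by
          intro v
          rcases eq_or_ne v a with rfl | hva
          · rw [hya]; exact add_nonneg (hx _) (hx _)
          rcases eq_or_ne v b with rfl | hvb
          · rw [hyb]
          · rw [hyk v hva hvb]; exact hx v
        have hbmem : b ∈ Finset.univ.erase a :=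
          Finset.mem_erase.2 ⟨hab.symm, Finset.mem_univ _⟩
        have hysum : ∑ v, y v = ∑ v, x v := by
          rw [← Finset.add_sum_erase _ y (Finset.mem_univ a),
              ← Finset.add_sum_erase _ x (Finset.mem_univ a),
              ← Finset.add_sum_erase _ y hbmem,
              ← Finset.add_sum_erase _ x hbmem, hya, hyb]
          have hre : ∑ v ∈ (Finset.univ.erase a).erase b, y v
              = ∑ v ∈ (Finset.univ.erase a).erase b, x v :=
            Finset.sum_congr rfl fun v hv =>
              hyk v (Finset.ne_of_mem_erase (Finset.mem_of_mem_erase hv))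
                (Finset.ne_of_mem_erase hv)
          rw [hre]; ring
        have hsupp : Finset.univ.filter (fun v => y v ≠ 0) ⊆ S.erase b := by
          intro v hv
          have hvy : y v ≠ 0 := (Finset.mem_filter.1 hv).2
          rcases eq_or_ne v b with rfl | hvb
          · exact absurd hyb hvy
          rcases eq_or_ne v a with rfl | hva
          · exact Finset.mem_erase.2 ⟨hvb, haS⟩
          · refine Finset.mem_erase.2 ⟨hvb, ?_⟩
            rw [hS]
            exact Finset.mem_filter.2 ⟨Finset.mem_univ _, by rwa [← hyk v hva hvb]⟩
        have hycard : (Finset.univ.filter (fun v => y v ≠ 0)).card ≤ N := by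
          have h1 := Finset.card_le_card hsupp
          have h2 : (S.erase b).card = S.card - 1 := Finset.card_erase_of_mem hbS
          have h3 : 0 < S.card := Finset.card_pos.2 ⟨b, hbS⟩
          omega
        have hfin := ih y hy0 hycard
        rwa [hysum] at hfin
      rcases le_total
        (∑ K ∈ (rCliques G r).filter (fun K => j ∈ K), ∏ k ∈ K.erase j, x k)
        (∑ K ∈ (rCliques G r).filter (fun K => i ∈ K), ∏ k ∈ K.erase i, x k) with h | h
      · exact main i j hiS' hjS' hij hna h
      · exact main j i hjS' hiS' hij.symm (fun h' => hna h'.symm) h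

lemma part1 (r n : ℕ) (hr : 2 ≤ r) (hdvd : r ∣ n) (G : SimpleGraph (Fin n))
    (hfree : G.CliqueFree (r + 1)) : (rCliques G r).card ≤ (n / r) ^ r := by
  have hrpos : (0:ℝ) < r := by exact_mod_cast (by omega : 0 < r)
  have h := keyN (by omega : 1 ≤ r) G hfree
    ((Finset.univ.filter (fun v : Fin n => (1:ℝ) ≠ 0)).card)
    (fun _ => (1:ℝ)) (fun _ => zero_le_one) le_rfl
  simp only [Finset.prod_const_one, Finset.sum_const, nsmul_eq_mul, mul_one] at h
  rw [Finset.card_univ, Fintype.card_fin] at h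
  have hcast : ((n / r : ℕ) : ℝ) = (n : ℝ) / r :=
    Nat.cast_div hdvd (by positivity)
  rw [← hcast] at h
  exact_mod_cast h

lemma resCard (r n : ℕ) (hr : 0 < r) (hdvd : r ∣ n) (i : ℕ) (hi : i < r) :
    (Finset.univ.filter (fun v : Fin n => (v : ℕ) % r = i)).card = n / r := by
  rw [← Fintype.card_fin (n / r), ← Finset.card_univ]
  refine Finset.card_bij'
    (fun (v : Fin n) _ => (⟨(v : ℕ) / r, Nat.div_lt_div_of_lt_of_dvd hdvd v.isLt⟩ : Fin (n / r)))
    (fun (k : Fin (n / r)) _ => (⟨i + (k : ℕ) * r, ?_⟩ : Fin n)) ?_ ?_ ?_ ?_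
  · calc i + (k : ℕ) * r < r + (k : ℕ) * r := by omega
      _ = ((k : ℕ) + 1) * r := by ring
      _ ≤ (n / r) * r := Nat.mul_le_mul_right r k.isLt
      _ = n := Nat.div_mul_cancel hdvd
  · intro v hv
    exact Finset.mem_univ _
  · intro k hk
    refine Finset.mem_filter.2 ⟨Finset.mem_univ _, ?_⟩
    simp only
    rw [Nat.add_mul_mod_self_right, Nat.mod_eq_of_lt hi]
  · intro v hv
    have hv2 : (v : ℕ) % r = i := (Finset.mem_filter.1 hv).2
    apply Fin.ext
    simp only
    rw [← hv2, Nat.mod_add_div']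
  · intro k hk
    apply Fin.ext
    simp only
    rw [Nat.add_mul_div_right _ _ hr, Nat.div_eq_of_lt hi, Nat.zero_add]

lemma part2 (r n : ℕ) (hr : 2 ≤ r) (hdvd : r ∣ n) :
    (rCliques (SimpleGraph.turanGraph n r) r).card = (n / r) ^ r := by
  classical
  have hr0 : 0 < r := by omega
  set T := SimpleGraph.turanGraph n r with hT
  set D : Finset (Fin r → Fin n) :=
    Fintype.piFinset (fun i : Fin r =>
      Finset.univ.filter (fun v : Fin n => (v : ℕ) % r = (i : ℕ))) with hD
  have hDcard : D.card = (n / r) ^ r := by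
    rw [hD, Fintype.card_piFinset]
    have hres : ∀ i : Fin r,
        (Finset.univ.filter (fun v : Fin n => (v : ℕ) % r = (i : ℕ))).card = n / r :=
      fun i => resCard r n hr0 hdvd (i : ℕ) i.isLt
    simp only [hres]
    rw [Finset.prod_const, Finset.card_univ, Fintype.card_fin]
  rw [← hDcard]
  have hmod : ∀ g ∈ D, ∀ i : Fin r, ((g i : ℕ)) % r = (i : ℕ) := by
    intro g hg i
    exact (Finset.mem_filter.1 (Fintype.mem_piFinset.1 hg i)).2
  have ginj : ∀ g ∈ D, Function.Injective g := by
    intro g hg a b hab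
    apply Fin.ext
    rw [← hmod g hg a, ← hmod g hg b, hab]
  refine (Finset.card_bij (fun g _ => Finset.image g Finset.univ) ?_ ?_ ?_).symm
  · -- maps to rCliques
    intro g hg
    refine mem_rCliques.2 ⟨?_, ?_⟩
    · intro u hu v hv huv
      obtain ⟨a, _, ha⟩ := Finset.mem_image.1 (by exact_mod_cast hu)
      obtain ⟨b, _, hb⟩ := Finset.mem_image.1 (by exact_mod_cast hv)
      show ((u : ℕ)) % r ≠ ((v : ℕ)) % r
      intro hmodeq
      apply huv
      rw [← ha, ← hb] at hmodeq ⊢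
      rw [hmod g hg a, hmod g hg b] at hmodeq
      exact congrArg g (Fin.ext hmodeq)
    · rw [Finset.card_image_of_injective _ (ginj g hg), Finset.card_univ, Fintype.card_fin]
  · -- injectivity
    intro g₁ hg₁ g₂ hg₂ heq
    have heq' : Finset.image g₁ Finset.univ = Finset.image g₂ Finset.univ := heq
    funext a
    have h1 : g₁ a ∈ Finset.image g₂ Finset.univ := by
      rw [← heq']; exact Finset.mem_image_of_mem _ (Finset.mem_univ _)
    obtain ⟨b, _, hb⟩ := Finset.mem_image.1 h1
    have hab : a = b := by
      apply Fin.ext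
      rw [← hmod g₁ hg₁ a, ← hmod g₂ hg₂ b, hb]
    rw [hab, hb]
    exact congrArg g₁ hab.symm
  · -- surjectivity
    intro K hK
    obtain ⟨hcl, hcard⟩ := mem_rCliques.1 hK
    have hres : ∀ i : Fin r, ∃ v, v ∈ K ∧ (v : ℕ) % r = (i : ℕ) := by
      intro i
      have hinj : Set.InjOn (fun v : Fin n => (⟨(v : ℕ) % r, Nat.mod_lt _ hr0⟩ : Fin r))
          (K : Set (Fin n)) := by
        intro u hu v hv huv
        by_contra hne
        have hadj := hcl hu hv hne
        exact hadj (congrArg Fin.val huv)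
      have hRcard :
          (K.image (fun v : Fin n => (⟨(v : ℕ) % r, Nat.mod_lt _ hr0⟩ : Fin r))).card = r := by
        rw [Finset.card_image_of_injOn hinj, hcard]
      have hRuniv : K.image (fun v : Fin n => (⟨(v : ℕ) % r, Nat.mod_lt _ hr0⟩ : Fin r))
          = Finset.univ :=
        Finset.eq_univ_of_card _ (by rw [hRcard, Fintype.card_fin])
      have hiR : i ∈ K.image (fun v : Fin n => (⟨(v : ℕ) % r, Nat.mod_lt _ hr0⟩ : Fin r)) :=
        hRuniv ▸ Finset.mem_univ i
      obtain ⟨v, hvK, hv⟩ := Finset.mem_image.1 hiR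
      exact ⟨v, hvK, congrArg Fin.val hv⟩
    choose g hgK hgmod using hres
    have hgD : g ∈ D := by
      rw [hD]
      exact Fintype.mem_piFinset.2 fun i =>
        Finset.mem_filter.2 ⟨Finset.mem_univ _, hgmod i⟩
    refine ⟨g, hgD, ?_⟩
    have hginj : Function.Injective g := ginj g hgD
    have hsub : Finset.image g Finset.univ ⊆ K := by
      intro v hv
      obtain ⟨a, _, ha⟩ := Finset.mem_image.1 hv
      exact ha ▸ hgK a
    refine Finset.eq_of_subset_of_card_le hsub ?_
    rw [Finset.card_image_of_injective _ hginj, Finset.card_univ, Fintype.card_fin, hcard]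

theorem stmt_10 (r n : ℕ) (hr : 2 ≤ r) (hn : 0 < n) (hdvd : r ∣ n)
    (G : SimpleGraph (Fin n)) (hfree : G.CliqueFree (r + 1)) :
    (rCliques G r).card ≤ (n / r) ^ r ∧
      (rCliques (SimpleGraph.turanGraph n r) r).card = (n / r) ^ r := by
  exact ⟨part1 r n hr hdvd G hfree, part2 r n hr hdvd⟩
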